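/- Let i ∈ {0,1} and j ∈ {1,2}. The mapping G_i^j from λ-ap-ho-term-graphs over Σλ^i to λ-term-graphs over Σλ^{i,j}, which inserts between any vertex w and its k-th successor w_k a chain of n scope-delimiter vertices labelled S whenever the abstraction prefix decreases by n from w to w_k (where n = |P(w)| − |P(w_k)| for application vertices w, n = |P(w)| + 1 − |P(w_k)| for abstraction vertices w; each inserted S-vertex passes to the next via its 0-indexed edge, and for j = 2 additionally carries a 1-indexed back-link edge to the abstraction vertex whose extended scope it closes), is well defined: its image is always a λ-term-graph over Σλ^{i,j}, i.e. the resulting Σλ^{i,j}-term-graph admits a correct abstraction-prefix function. -/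

import Mathlib

/-! Common framework: term graphs over a signature, homomorphisms, bisimulations,
    access paths, λ-ho-term-graphs, λ-ap-ho-term-graphs, λ-term-graphs with
    scope delimiters, and the translation constructions. -/

inductive Lab3 : Type
  | app | lam | var
  deriving DecidableEq

/-- Arity function of the signature Σλ^i = {@, λ, 0} with ar(@)=2, ar(λ)=1, ar(0)=i. -/
def ar3 (i : ℕ) : Lab3 → ℕ
  | .app => 2
  | .lam => 1
  | .var => i

inductive Lab4 : Type
  | app | lam | var | del
  deriving DecidableEq

/-- Arity function of Σλ^{i,j} = {@, λ, 0, S} with ar(@)=2, ar(λ)=1, ar(0)=i, ar(S)=j. -/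
def ar4 (i j : ℕ) : Lab4 → ℕ
  | .app => 2
  | .lam => 1
  | .var => i
  | .del => j

def lab3to4 : Lab3 → Lab4
  | .app => .app
  | .lam => .lam
  | .var => .var

def lab4to3 : Lab4 → Lab3
  | .app => .app
  | .lam => .lam
  | .var => .var
  | .del => .var

/-- A term graph over a signature: vertex labelling, argument (successor) lists of
    length matching the arity of the label, a root, and every vertex reachable
    from the root. -/
structure TermGraph (L : Type) (ar : L → ℕ) (V : Type) where
  lab : V → L
  args : V → List V
  root : V
  args_len : ∀ v, (args v).length = ar (lab v)
  reach : ∀ v, Relation.ReflTransGen (fun a b => b ∈ args a) root v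

namespace TermGraph

variable {L V : Type} {ar : L → ℕ}

/-- `G.Succ k w w'` : `w'` is the `k`-th successor of `w` (the edge w ↣_k w'). -/
def Succ (G : TermGraph L ar V) (k : ℕ) (w w' : V) : Prop :=
  (G.args w)[k]? = some w'

/-- `G.Edge w w'` : `w'` is some successor of `w` (the relation ↣). -/
def Edge (G : TermGraph L ar V) (w w' : V) : Prop :=
  w' ∈ G.args w

/-- Reachability ↠ along edges. -/
def Reaches (G : TermGraph L ar V) (w w' : V) : Prop :=
  Relation.ReflTransGen G.Edge w w'

end TermGraph

/-- Homomorphism (functional bisimulation) of term graphs. -/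
def IsHom {L V₁ V₂ : Type} {ar : L → ℕ} (h : V₁ → V₂)
    (G₁ : TermGraph L ar V₁) (G₂ : TermGraph L ar V₂) : Prop :=
  (∀ v, G₂.lab (h v) = G₁.lab v) ∧
  (∀ v, G₂.args (h v) = (G₁.args v).map h) ∧
  h G₁.root = G₂.root

/-- Bisimulation between term graphs: a term graph on a set of pairs, rooted at the
    pair of roots, whose two projections are homomorphisms. -/
def Bisim {L V₁ V₂ : Type} {ar : L → ℕ}
    (G₁ : TermGraph L ar V₁) (G₂ : TermGraph L ar V₂) : Prop :=
  ∃ (S : Set (V₁ × V₂)) (R : TermGraph L ar S),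
    (R.root : V₁ × V₂) = (G₁.root, G₂.root) ∧
    IsHom (fun x : S => x.val.1) R G₁ ∧
    IsHom (fun x : S => x.val.2) R G₂

/-- An access path of a vertex `w`: a path from the root to `w` (with edge indices)
    that visits no vertex twice. -/
structure AccessPath {L V : Type} {ar : L → ℕ} (G : TermGraph L ar V) (w : V) where
  n : ℕ
  vs : Fin (n + 1) → V
  ks : Fin n → ℕ
  start : vs 0 = G.root
  finish : vs (Fin.last n) = w
  step : ∀ m : Fin n, G.Succ (ks m) (vs m.castSucc) (vs m.succ)
  inj : Function.Injective vs

/-- The conditions (root), (self), (nest), (closed), (scope)₀ and (for i = 1) (scope)₁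
    on a scope function. -/
def ScopeConds (i : ℕ) {V : Type} (G : TermGraph Lab3 (ar3 i) V)
    (Sc : V → Set V) : Prop :=
  (∀ v, G.lab v = .lam → G.root ∉ Sc v \ {v}) ∧
  (∀ v, G.lab v = .lam → v ∈ Sc v) ∧
  (∀ v₀ v₁, G.lab v₀ = .lam → G.lab v₁ = .lam → v₁ ∈ Sc v₀ \ {v₀} →
      Sc v₁ ⊆ Sc v₀ \ {v₀}) ∧
  (∀ v w wk k, G.lab v = .lam → G.Succ k w wk → wk ∈ Sc v \ {v} → w ∈ Sc v) ∧
  (∀ w, G.lab w = .var → ∃ v, G.lab v = .lam ∧ w ∈ Sc v \ {v}) ∧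
  (i = 1 → ∀ w w₀, G.lab w = .var → G.Succ 0 w w₀ →
      G.lab w₀ = .lam ∧ ∀ v, G.lab v = .lam → (w ∈ Sc v ↔ w₀ ∈ Sc v))

/-- λ-ho-term-graph over Σλ^i: a Σλ^i-term-graph endowed with a scope function. -/
structure LamHoTG (i : ℕ) (V : Type) extends TermGraph Lab3 (ar3 i) V where
  Sc : V → Set V
  conds : ScopeConds i toTermGraph Sc

/-- Correctness of an abstraction-prefix function for a Σλ^i-term-graph:
    (root), (λ), (@), (0)₀, and (for i = 1) (0)₁. -/
def CorrectAP (i : ℕ) {V : Type} (G : TermGraph Lab3 (ar3 i) V)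
    (P : V → List V) : Prop :=
  (P G.root = []) ∧
  (∀ w w₀, G.lab w = .lam → G.Succ 0 w w₀ → P w₀ <+: P w ++ [w]) ∧
  (∀ w wk k, G.lab w = .app → G.Succ k w wk → P wk <+: P w) ∧
  (∀ w, G.lab w = .var → P w ≠ []) ∧
  (i = 1 → ∀ w w₀, G.lab w = .var → G.Succ 0 w w₀ →
      G.lab w₀ = .lam ∧ P w₀ ++ [w₀] = P w)

/-- λ-ap-ho-term-graph over Σλ^i: a Σλ^i-term-graph endowed with a correct
    abstraction-prefix function. -/
structure LamApHoTG (i : ℕ) (V : Type) extends TermGraph Lab3 (ar3 i) V where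
  P : V → List V
  correct : CorrectAP i toTermGraph P

/-- `ScToP G Sc P` : the abstraction-prefix function `P` is the one obtained from the
    scope function `Sc` by the mapping A_i: for each vertex `w`, `P w` lists exactly
    the binders of `w` other than `w` itself, in order of strictly decreasing scopes. -/
def ScToP {i : ℕ} {V : Type} (G : TermGraph Lab3 (ar3 i) V)
    (Sc : V → Set V) (P : V → List V) : Prop :=
  ∀ w, (∀ v, v ∈ P w ↔ (G.lab v = .lam ∧ w ∈ Sc v ∧ v ≠ w)) ∧
    (P w).Chain' (fun a b => Sc b ⊂ Sc a)

/-- The scope function obtained from an abstraction-prefix function by the mapping B_i: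
    Sc(v) = { w | v occurs in P(w) } ∪ {v}. -/
def ScOfP {V : Type} (P : V → List V) : V → Set V :=
  fun v => {w | v ∈ P w} ∪ {v}

/-- Homomorphism of λ-ho-term-graphs (given by their underlying term graphs and
    scope functions). -/
def IsHoHom {i : ℕ} {V₁ V₂ : Type} (h : V₁ → V₂)
    (G₁ : TermGraph Lab3 (ar3 i) V₁) (Sc₁ : V₁ → Set V₁)
    (G₂ : TermGraph Lab3 (ar3 i) V₂) (Sc₂ : V₂ → Set V₂) : Prop :=
  IsHom h G₁ G₂ ∧ ∀ v, G₁.lab v = .lam → h '' Sc₁ v = Sc₂ (h v)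

/-- Homomorphism of λ-ap-ho-term-graphs (given by their underlying term graphs and
    abstraction-prefix functions). -/
def IsApHom {i : ℕ} {V₁ V₂ : Type} (h : V₁ → V₂)
    (G₁ : TermGraph Lab3 (ar3 i) V₁) (P₁ : V₁ → List V₁)
    (G₂ : TermGraph Lab3 (ar3 i) V₂) (P₂ : V₂ → List V₂) : Prop :=
  IsHom h G₁ G₂ ∧ ∀ v, (P₁ v).map h = P₂ (h v)

/-- Correctness of an abstraction-prefix function for a Σλ^{i,j}-term-graph:
    (root), (λ), (@), (0)₀, (0)₁ (for i = 1), (S)₁, and (S)₂ (for j = 2). -/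
def CorrectAP4 (i j : ℕ) {V : Type} (G : TermGraph Lab4 (ar4 i j) V)
    (P : V → List V) : Prop :=
  (P G.root = []) ∧
  (∀ w w₀, G.lab w = .lam → G.Succ 0 w w₀ → P w₀ = P w ++ [w]) ∧
  (∀ w wk k, G.lab w = .app → G.Succ k w wk → P wk = P w) ∧
  (∀ w, G.lab w = .var → P w ≠ []) ∧
  (i = 1 → ∀ w w₀, G.lab w = .var → G.Succ 0 w w₀ →
      G.lab w₀ = .lam ∧ P w₀ ++ [w₀] = P w) ∧
  (∀ w w₀, G.lab w = .del → G.Succ 0 w w₀ → ∃ v, P w₀ ++ [v] = P w) ∧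
  (j = 2 → ∀ w w₁, G.lab w = .del → G.Succ 1 w w₁ →
      G.lab w₁ = .lam ∧ P w₁ ++ [w₁] = P w)

/-- Vertex-set predicate of the construction G_i^j: original vertices (inl) together
    with scope-delimiter vertices (w, k, w', p) inserted along an edge w ↣_k w',
    one for each prefix p with P(w') < p ≤ P(w)·w (for λ-vertices w),
    resp. P(w') < p ≤ P(w) (for @-vertices w). -/
def GVP {i : ℕ} {V : Type} (G : TermGraph Lab3 (ar3 i) V) (P : V → List V) :
    V ⊕ (V × ℕ × V × List V) → Prop
  | .inl _ => True
  | .inr (w, k, w', p) =>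
      G.Succ k w w' ∧ P w' <+: p ∧ P w' ≠ p ∧
      ((G.lab w = .lam ∧ p <+: P w ++ [w]) ∨ (G.lab w = .app ∧ p <+: P w))

/-- Vertex set of the image of G_i^j. -/
def GVert {i : ℕ} {V : Type} (G : TermGraph Lab3 (ar3 i) V) (P : V → List V) : Type :=
  { x : V ⊕ (V × ℕ × V × List V) // GVP G P x }

/-- Labelling of the image of G_i^j: original labels on original vertices,
    `S` on the inserted delimiter vertices. -/
def GLab {i : ℕ} {V : Type} (G : TermGraph Lab3 (ar3 i) V) (P : V → List V)
    (x : GVert G P) : Lab4 :=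
  match x.val with
  | .inl w => lab3to4 (G.lab w)
  | .inr _ => .del

/-- The successor relation of the image of G_i^j (clauses as in the definition of
    the mapping G_i^j; for j = 2 the inserted S-vertices carry a 1-indexed back-link
    to the abstraction vertex whose extended scope they close). -/
def CSucc {i : ℕ} {V : Type} (j : ℕ) (G : TermGraph Lab3 (ar3 i) V) (P : V → List V)
    (k : ℕ) (x y : GVert G P) : Prop :=
  (∃ w wk, x.val = .inl w ∧ y.val = .inl wk ∧ G.Succ k w wk ∧
     (G.lab w = .var ∨ (G.lab w = .lam ∧ P wk = P w ++ [w]) ∨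
      (G.lab w = .app ∧ P wk = P w))) ∨
  (∃ w w₀, x.val = .inl w ∧ G.lab w = .lam ∧ G.Succ 0 w w₀ ∧ P w₀ ≠ P w ++ [w] ∧
     k = 0 ∧ y.val = .inr (w, 0, w₀, P w ++ [w])) ∨
  (∃ w wk, x.val = .inl w ∧ G.lab w = .app ∧ G.Succ k w wk ∧ P wk ≠ P w ∧
     y.val = .inr (w, k, wk, P w)) ∨
  (∃ w k' w' p v, x.val = .inr (w, k', w', p ++ [v]) ∧ k = 0 ∧ P w' ≠ p ∧
     y.val = .inr (w, k', w', p)) ∨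
  (∃ w k' w' v, x.val = .inr (w, k', w', P w' ++ [v]) ∧ k = 0 ∧ y.val = .inl w') ∨
  (j = 2 ∧ ∃ w k' w' p v, x.val = .inr (w, k', w', p ++ [v]) ∧ k = 1 ∧ y.val = .inl v)

/-- `IsGImage i j G P G'` : the Σλ^{i,j}-term-graph `G'` is the image of the
    λ-ap-ho-term-graph given by `G` and `P` under the mapping G_i^j. -/
def IsGImage (i j : ℕ) {V : Type} (G : TermGraph Lab3 (ar3 i) V) (P : V → List V)
    (G' : TermGraph Lab4 (ar4 i j) (GVert G P)) : Prop :=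
  (G'.root).val = .inl G.root ∧
  (∀ x, G'.lab x = GLab G P x) ∧
  (∀ k x y, G'.Succ k x y ↔ CSucc j G P k x y)

/-- One step along the 0-indexed edge of a scope-delimiter vertex. -/
def DelStep {i j : ℕ} {V : Type} (G : TermGraph Lab4 (ar4 i j) V) (a b : V) : Prop :=
  G.lab a = .del ∧ G.Succ 0 a b

/-- The non-delimiter vertices of a Σλ^{i,j}-term-graph. -/
def NVert {i j : ℕ} {V : Type} (G : TermGraph Lab4 (ar4 i j) V) : Type :=
  { v : V // G.lab v ≠ .del }

/-- `IsNImage i j G P G' P'` : the Σλ^i-term-graph `G'` with abstraction-prefix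
    function `P'` is the image of the λ-term-graph `G` (with correct prefix
    function `P`) under the mapping N_i^j: S-vertices are deleted, labels and the
    prefix function are restricted, the root is kept, and w₀ ↣'_k w₁ holds iff
    w₁ is reached from the k-th successor of w₀ by passing through finitely many
    S-vertices along their 0-indexed edges. -/
def IsNImage (i j : ℕ) {V : Type} (G : TermGraph Lab4 (ar4 i j) V) (P : V → List V)
    (G' : TermGraph Lab3 (ar3 i) (NVert G)) (P' : NVert G → List (NVert G)) : Prop :=
  (G'.root).val = G.root ∧
  (∀ x : NVert G, G'.lab x = lab4to3 (G.lab x.val)) ∧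
  (∀ k (a b : NVert G), G'.Succ k a b ↔
      ∃ u, G.Succ k a.val u ∧ Relation.ReflTransGen (DelStep G) u b.val) ∧
  (∀ v : NVert G, (P' v).map Subtype.val = P v.val)

/-- A λ-term-graph over Σλ^{1,2} (given by `G` with correct prefix function `P`) is
    fully back-linked if the last vertex of the abstraction prefix of any vertex `w`
    is reachable from `w`. -/
def FullyBackLinked {V : Type} (G : TermGraph Lab4 (ar4 1 2) V)
    (P : V → List V) : Prop :=
  ∀ w v p, P w = p ++ [v] → G.Reaches w v

/-- Eager-scope: whenever P(w) = p·v there is a path from `w` to `v` which ends with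
    a 0-indexed edge from a variable vertex to `v`, and all of whose intermediate
    vertices have abstraction prefixes extending P(w). -/
def EagerScope {V : Type} (G : TermGraph Lab4 (ar4 1 2) V)
    (P : V → List V) : Prop :=
  ∀ w v p, P w = p ++ [v] →
    ∃ (n : ℕ) (u : Fin (n + 1) → V),
      u 0 = w ∧
      (∀ m : Fin n, G.Edge (u m.castSucc) (u m.succ)) ∧
      G.Succ 0 (u (Fin.last n)) v ∧
      G.lab (u (Fin.last n)) = .var ∧
      ∀ m : Fin (n + 1), m ≠ 0 → P w <+: P (u m)

/-! ### Auxiliary development for Proposition 5.4 -/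

section GMapAux

variable {i : ℕ} {V : Type}

lemma gvp_inl {G : TermGraph Lab3 (ar3 i) V} {P : V → List V} {w : V} :
    GVP G P (.inl w) := trivial

/-- A list is a "good prefix list": every initial segment ending in `v` certifies
    that `v` is a λ-vertex with the preceding segment as abstraction prefix. -/
def GoodL (G : TermGraph Lab3 (ar3 i) V) (P : V → List V) (q : List V) : Prop :=
  ∀ p v, p ++ [v] <+: q → G.lab v = .lam ∧ P v = p

lemma goodL_of_prefix {G : TermGraph Lab3 (ar3 i) V} {P : V → List V} {q q' : List V}
    (h : GoodL G P q) (hpre : q' <+: q) : GoodL G P q' :=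
  fun p v hp => h p v (hp.trans hpre)

lemma goodL_nil {G : TermGraph Lab3 (ar3 i) V} {P : V → List V} : GoodL G P [] := by
  intro p v hp
  have := hp.length_le
  simp at this

lemma goodL_concat {G : TermGraph Lab3 (ar3 i) V} {P : V → List V} {q : List V} {w : V}
    (h : GoodL G P q) (hl : G.lab w = .lam) (hP : P w = q) : GoodL G P (q ++ [w]) := by
  intro p v hp
  rcases Nat.lt_or_ge (p ++ [v]).length (q.length + 1) with hlen | hlen
  · have hle : (p ++ [v]).length ≤ q.length := by omega
    exact h p v (List.prefix_of_prefix_length_le hp (List.prefix_append q [w]) hle)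
  · have hlen' : (p ++ [v]).length = (q ++ [w]).length := by
      have := hp.length_le
      simp only [List.length_append, List.length_singleton] at *
      omega
    have heq : p ++ [v] = q ++ [w] := hp.eq_of_length hlen'
    obtain ⟨h1, h2⟩ := List.append_inj' heq rfl
    simp only [List.cons.injEq, and_true] at h2
    subst h1; subst h2
    exact ⟨hl, hP⟩

lemma succ_index_lt {G : TermGraph Lab3 (ar3 i) V} {k : ℕ} {w wk : V}
    (h : G.Succ k w wk) : k < (G.args w).length :=
  (List.getElem?_eq_some_iff.mp h).1

lemma succ_getElem {G : TermGraph Lab3 (ar3 i) V} {k : ℕ} {w wk : V}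
    (h : G.Succ k w wk) : ∃ hk : k < (G.args w).length, (G.args w)[k] = wk := by
  refine ⟨succ_index_lt h, ?_⟩
  have h' := h
  unfold TermGraph.Succ at h'
  rw [List.getElem?_eq_getElem (succ_index_lt h)] at h'
  exact Option.some.inj h'

lemma good_all (hi : i = 0 ∨ i = 1) (G : LamApHoTG i V) (w : V) :
    GoodL G.toTermGraph G.P (G.P w) := by
  have hreach := G.reach w
  induction hreach with
  | refl => rw [G.correct.1]; exact goodL_nil
  | tail _ hbc ih =>
    rename_i b c _
    obtain ⟨k, hk⟩ := List.mem_iff_getElem.mp hbc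
    have hsucc : G.toTermGraph.Succ k b c := by
      simp [TermGraph.Succ, List.getElem?_eq_getElem hk.1, hk.2]
    cases hlb : G.toTermGraph.lab b with
    | lam =>
      have hk0 : k = 0 := by
        have := succ_index_lt hsucc
        rw [G.toTermGraph.args_len, hlb] at this
        simpa [ar3] using this
      subst hk0
      have := G.correct.2.1 b c hlb hsucc
      exact goodL_of_prefix (goodL_concat ih hlb rfl) this
    | app =>
      exact goodL_of_prefix ih (G.correct.2.2.1 b c k hlb hsucc)
    | var =>
      rcases hi with hi | hi
      · exfalso
        have := succ_index_lt hsucc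
        rw [G.toTermGraph.args_len, hlb, hi] at this
        simp [ar3] at this
      · have hk0 : k = 0 := by
          have := succ_index_lt hsucc
          rw [G.toTermGraph.args_len, hlb, hi] at this
          simpa [ar3] using this
        subst hk0
        obtain ⟨_, hPeq⟩ := G.correct.2.2.2.2 hi b c hlb hsucc
        exact goodL_of_prefix ih ⟨[c], by simpa using hPeq⟩

lemma gvp_ne_nil {G : TermGraph Lab3 (ar3 i) V} {P : V → List V} {w : V} {k' : ℕ}
    {w' : V} {p : List V} (hx : GVP G P (.inr (w, k', w', p))) : p ≠ [] := by
  intro h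
  subst h
  obtain ⟨_, hpre, hne, _⟩ := hx
  exact hne (List.prefix_nil.mp hpre)

lemma gvp_proper_len {G : TermGraph Lab3 (ar3 i) V} {P : V → List V} {w : V} {k' : ℕ}
    {w' : V} {p : List V} (hx : GVP G P (.inr (w, k', w', p))) :
    (P w').length < p.length := by
  obtain ⟨_, hpre, hne, _⟩ := hx
  rcases lt_or_eq_of_le hpre.length_le with h | h
  · exact h
  · exact absurd (hpre.eq_of_length h) hne

lemma gvp_drop {G : TermGraph Lab3 (ar3 i) V} {P : V → List V} {w : V} {k' : ℕ}
    {w' : V} {p : List V} (hx : GVP G P (.inr (w, k', w', p)))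
    (hne : P w' ≠ p.dropLast) : GVP G P (.inr (w, k', w', p.dropLast)) := by
  obtain ⟨hs, hpre, hne', hdisj⟩ := hx
  refine ⟨hs, ?_, hne, ?_⟩
  · refine List.prefix_of_prefix_length_le hpre (List.dropLast_prefix p) ?_
    have := gvp_proper_len ⟨hs, hpre, hne', hdisj⟩
    simp only [List.length_dropLast]
    omega
  · rcases hdisj with ⟨h1, h2⟩ | ⟨h1, h2⟩
    · exact Or.inl ⟨h1, (List.dropLast_prefix p).trans h2⟩
    · exact Or.inr ⟨h1, (List.dropLast_prefix p).trans h2⟩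

lemma lab3_not_var_not_lam {l : Lab3} (h1 : l ≠ .var) (h2 : l ≠ .lam) : l = .app := by
  cases l <;> simp_all

open Classical in
/-- The target vertex of the `k`-th edge out of an original vertex `w` in the image
    of `G_i^j`. -/
noncomputable def childOf (G : LamApHoTG i V) (w wk : V) (k : ℕ)
    (h : G.toTermGraph.Succ k w wk) : GVert G.toTermGraph G.P :=
  if hv : G.toTermGraph.lab w = .var then ⟨.inl wk, gvp_inl⟩
  else if hl : G.toTermGraph.lab w = .lam then
    if he : G.P wk = G.P w ++ [w] then ⟨.inl wk, gvp_inl⟩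
    else ⟨.inr (w, k, wk, G.P w ++ [w]), by
      refine ⟨h, ?_, he, Or.inl ⟨hl, List.prefix_refl _⟩⟩
      have hk0 : k = 0 := by
        have := succ_index_lt h
        rw [G.toTermGraph.args_len, hl] at this
        simpa [ar3] using this
      subst hk0
      exact G.correct.2.1 w wk hl h⟩
  else
    if he : G.P wk = G.P w then ⟨.inl wk, gvp_inl⟩
    else ⟨.inr (w, k, wk, G.P w), by
      have ha := lab3_not_var_not_lam hv hl
      exact ⟨h, G.correct.2.2.1 w wk k ha h, he, Or.inr ⟨ha, List.prefix_refl _⟩⟩⟩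

open Classical in
/-- Successor lists of the image of `G_i^j`. -/
noncomputable def gargs (G : LamApHoTG i V) (j : ℕ) :
    GVert G.toTermGraph G.P → List (GVert G.toTermGraph G.P)
  | ⟨.inl w, _⟩ => List.ofFn (n := (G.toTermGraph.args w).length)
      (fun m => childOf G w ((G.toTermGraph.args w)[m]) m (by
        show (G.toTermGraph.args w)[(m : ℕ)]? = _
        rw [List.getElem?_eq_getElem m.isLt]
        rfl))
  | ⟨.inr (w, k', w', p), hx⟩ =>
      (if he : G.P w' = p.dropLast then ⟨.inl w', gvp_inl⟩
       else ⟨.inr (w, k', w', p.dropLast), gvp_drop hx he⟩) ::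
      List.replicate (j - 1) ⟨.inl (p.getLast (gvp_ne_nil hx)), gvp_inl⟩

lemma gargs_inl (G : LamApHoTG i V) (j : ℕ) (w : V) (h : GVP G.toTermGraph G.P (.inl w)) :
    gargs G j ⟨.inl w, h⟩ = List.ofFn (n := (G.toTermGraph.args w).length)
      (fun m => childOf G w ((G.toTermGraph.args w)[m]) m (by
        show (G.toTermGraph.args w)[(m : ℕ)]? = _
        rw [List.getElem?_eq_getElem m.isLt]
        rfl)) := rfl

open Classical in
lemma gargs_inr (G : LamApHoTG i V) (j : ℕ) (w : V) (k' : ℕ) (w' : V) (p : List V)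
    (hx : GVP G.toTermGraph G.P (.inr (w, k', w', p))) :
    gargs G j ⟨.inr (w, k', w', p), hx⟩ =
      (if he : G.P w' = p.dropLast then ⟨.inl w', gvp_inl⟩
       else ⟨.inr (w, k', w', p.dropLast), gvp_drop hx he⟩) ::
      List.replicate (j - 1) ⟨.inl (p.getLast (gvp_ne_nil hx)), gvp_inl⟩ := rfl

lemma reach_descend_aux (G : LamApHoTG i V) (j : ℕ) (n : ℕ) :
    ∀ (p : List V), p.length ≤ n → ∀ (w : V) (k' : ℕ) (w' : V)
      (hx : GVP G.toTermGraph G.P (.inr (w, k', w', p))),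
      Relation.ReflTransGen (fun a b => b ∈ gargs G j a)
        ⟨.inr (w, k', w', p), hx⟩ ⟨.inl w', gvp_inl⟩ := by
  induction n with
  | zero =>
    intro p hp w k' w' hx
    have := gvp_proper_len hx
    omega
  | succ n ih =>
    intro p hp w k' w' hx
    by_cases he : G.P w' = p.dropLast
    · refine Relation.ReflTransGen.single ?_
      erw [gargs_inr, dif_pos he]
      exact List.mem_cons_self
    · refine Relation.ReflTransGen.head (b := ⟨.inr (w, k', w', p.dropLast), gvp_drop hx he⟩)
        ?_ (ih _ ?_ _ _ _ _)
      · erw [gargs_inr, dif_neg he]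
        exact List.mem_cons_self
      · have hnil := gvp_ne_nil hx
        have : p.length ≠ 0 := by simpa using hnil
        simp only [List.length_dropLast]
        omega

lemma reach_descend (G : LamApHoTG i V) (j : ℕ) {w : V} {k' : ℕ} {w' : V} {p : List V}
    (hx : GVP G.toTermGraph G.P (.inr (w, k', w', p))) :
    Relation.ReflTransGen (fun a b => b ∈ gargs G j a)
      ⟨.inr (w, k', w', p), hx⟩ ⟨.inl w', gvp_inl⟩ :=
  reach_descend_aux G j p.length p le_rfl w k' w' hx

lemma reach_chain_aux (G : LamApHoTG i V) (j : ℕ) (n : ℕ) :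
    ∀ (p₂ : List V), p₂.length ≤ n → ∀ (p : List V) (w : V) (k' : ℕ) (w' : V)
      (hx : GVP G.toTermGraph G.P (.inr (w, k', w', p)))
      (hx2 : GVP G.toTermGraph G.P (.inr (w, k', w', p₂))), p <+: p₂ →
      Relation.ReflTransGen (fun a b => b ∈ gargs G j a)
        ⟨.inr (w, k', w', p₂), hx2⟩ ⟨.inr (w, k', w', p), hx⟩ := by
  induction n with
  | zero =>
    intro p₂ hlen p w k' w' hx hx2 hpre
    have := gvp_proper_len hx2
    omega
  | succ n ih =>
    intro p₂ hlen p w k' w' hx hx2 hpre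
    by_cases heq : p = p₂
    · subst heq
      exact Relation.ReflTransGen.refl
    · have hlt : p.length < p₂.length := by
        rcases lt_or_eq_of_le hpre.length_le with h | h
        · exact h
        · exact absurd (hpre.eq_of_length h) heq
      have hproper : p <+: p₂.dropLast := by
        refine List.prefix_of_prefix_length_le hpre (List.dropLast_prefix p₂) ?_
        simp only [List.length_dropLast]
        omega
      have hne : G.P w' ≠ p₂.dropLast := by
        intro h
        have h1 : p <+: G.P w' := h ▸ hproper
        have h2 : G.P w' <+: p := hx.2.1
        exact hx.2.2.1 (h2.eq_of_length (le_antisymm h2.length_le h1.length_le))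
      refine Relation.ReflTransGen.head (b := ⟨.inr (w, k', w', p₂.dropLast), gvp_drop hx2 hne⟩)
        ?_ (ih _ ?_ _ _ _ _ _ _ hproper)
      · erw [gargs_inr, dif_neg hne]
        exact List.mem_cons_self
      · have hnil := gvp_ne_nil hx2
        have : p₂.length ≠ 0 := by simpa using hnil
        simp only [List.length_dropLast]
        omega

lemma childOf_mem (G : LamApHoTG i V) (j : ℕ) {w wk : V} {k : ℕ}
    (h : G.toTermGraph.Succ k w wk) (hw : GVP G.toTermGraph G.P (.inl w)) :
    childOf G w wk k h ∈ gargs G j ⟨.inl w, hw⟩ := by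
  obtain ⟨hk, hget⟩ := succ_getElem h
  rw [gargs_inl]
  subst hget
  exact List.mem_ofFn.mpr ⟨⟨k, hk⟩, rfl⟩

lemma reach_step_inl (G : LamApHoTG i V) (j : ℕ) {w wk : V} {k : ℕ}
    (h : G.toTermGraph.Succ k w wk) :
    Relation.ReflTransGen (fun a b => b ∈ gargs G j a)
      ⟨.inl w, gvp_inl⟩ ⟨.inl wk, gvp_inl⟩ := by
  have hmem := childOf_mem G j h gvp_inl
  refine Relation.ReflTransGen.head hmem ?_
  unfold childOf
  by_cases hv : G.toTermGraph.lab w = .var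
  · erw [dif_pos hv]; exact Relation.ReflTransGen.refl
  by_cases hl : G.toTermGraph.lab w = .lam
  · erw [dif_neg hv, dif_pos hl]
    by_cases he : G.P wk = G.P w ++ [w]
    · erw [dif_pos he]; exact Relation.ReflTransGen.refl
    · erw [dif_neg he]; exact reach_descend G j _
  · erw [dif_neg hv, dif_neg hl]
    by_cases he : G.P wk = G.P w
    · erw [dif_pos he]; exact Relation.ReflTransGen.refl
    · erw [dif_neg he]; exact reach_descend G j _

lemma reach_root_inl (G : LamApHoTG i V) (j : ℕ) (w : V) :
    Relation.ReflTransGen (fun a b => b ∈ gargs G j a)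
      ⟨.inl G.toTermGraph.root, gvp_inl⟩ ⟨.inl w, gvp_inl⟩ := by
  have hreach := G.reach w
  induction hreach with
  | refl => exact Relation.ReflTransGen.refl
  | tail _ hbc ih =>
    rename_i b c _
    obtain ⟨k, hk⟩ := List.mem_iff_getElem.mp hbc
    have hsucc : G.toTermGraph.Succ k b c := by
      simp [TermGraph.Succ, List.getElem?_eq_getElem hk.1, hk.2]
    exact ih.trans (reach_step_inl G j hsucc)

lemma reach_inr (G : LamApHoTG i V) (j : ℕ) {w : V} {k' : ℕ} {w' : V} {p : List V}
    (hx : GVP G.toTermGraph G.P (.inr (w, k', w', p))) :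
    Relation.ReflTransGen (fun a b => b ∈ gargs G j a)
      ⟨.inl G.toTermGraph.root, gvp_inl⟩ ⟨.inr (w, k', w', p), hx⟩ := by
  obtain ⟨hs, hpre, hne, hdisj⟩ := hx
  have hplen : (G.P w').length < p.length :=
    gvp_proper_len (⟨hs, hpre, hne, hdisj⟩ : GVP G.toTermGraph G.P (.inr (w, k', w', p)))
  rcases hdisj with ⟨hl, hpmax⟩ | ⟨hl, hpmax⟩
  · -- λ-vertex: pmax = P w ++ [w]
    have hne' : G.P w' ≠ G.P w ++ [w] := by
      intro h
      have := hpmax.length_le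
      rw [h] at hplen
      omega
    have hx2 : GVP G.toTermGraph G.P (.inr (w, k', w', G.P w ++ [w])) :=
      ⟨hs, hpre.trans hpmax, hne', Or.inl ⟨hl, List.prefix_refl _⟩⟩
    obtain ⟨hk, hget⟩ := succ_getElem hs
    have hchild : childOf G w w' k' hs = ⟨.inr (w, k', w', G.P w ++ [w]), hx2⟩ := by
      unfold childOf
      erw [dif_neg (by simp [hl]), dif_pos hl, dif_neg hne']
    have hmem := childOf_mem G j hs gvp_inl
    rw [hchild] at hmem
    exact (reach_root_inl G j w).trans (Relation.ReflTransGen.head hmem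
      (reach_chain_aux G j _ _ le_rfl _ _ _ _ _ _ hpmax))
  · -- @-vertex: pmax = P w
    have hne' : G.P w' ≠ G.P w := by
      intro h
      have := hpmax.length_le
      rw [h] at hplen
      omega
    have hx2 : GVP G.toTermGraph G.P (.inr (w, k', w', G.P w)) :=
      ⟨hs, hpre.trans hpmax, hne', Or.inr ⟨hl, List.prefix_refl _⟩⟩
    obtain ⟨hk, hget⟩ := succ_getElem hs
    have hchild : childOf G w w' k' hs = ⟨.inr (w, k', w', G.P w), hx2⟩ := by
      unfold childOf
      erw [dif_neg (by simp [hl]), dif_neg (by simp [hl]), dif_neg hne']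
    have hmem := childOf_mem G j hs gvp_inl
    rw [hchild] at hmem
    exact (reach_root_inl G j w).trans (Relation.ReflTransGen.head hmem
      (reach_chain_aux G j _ _ le_rfl _ _ _ _ _ _ hpmax))

lemma reach_all (G : LamApHoTG i V) (j : ℕ) (x : GVert G.toTermGraph G.P) :
    Relation.ReflTransGen (fun a b => b ∈ gargs G j a)
      ⟨.inl G.toTermGraph.root, gvp_inl⟩ x := by
  obtain ⟨xv, hxv⟩ := x
  cases xv with
  | inl w => exact reach_root_inl G j w
  | inr t =>
    obtain ⟨w, k', w', p⟩ := t
    exact reach_inr G j hxv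

lemma csucc_of_childOf (G : LamApHoTG i V) (j : ℕ) {w wk : V} {k : ℕ}
    (h : G.toTermGraph.Succ k w wk) (hw : GVP G.toTermGraph G.P (.inl w)) :
    CSucc j G.toTermGraph G.P k ⟨.inl w, hw⟩ (childOf G w wk k h) := by
  unfold childOf
  by_cases hv : G.toTermGraph.lab w = .var
  · erw [dif_pos hv]; exact Or.inl ⟨w, wk, rfl, rfl, h, Or.inl hv⟩
  by_cases hl : G.toTermGraph.lab w = .lam
  · erw [dif_neg hv, dif_pos hl]
    by_cases he : G.P wk = G.P w ++ [w]
    · erw [dif_pos he]; exact Or.inl ⟨w, wk, rfl, rfl, h, Or.inr (Or.inl ⟨hl, he⟩)⟩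
    · erw [dif_neg he]
      have hk0 : k = 0 := by
        have := succ_index_lt h
        rw [G.toTermGraph.args_len, hl] at this
        simpa [ar3] using this
      subst hk0
      exact Or.inr (Or.inl ⟨w, wk, rfl, hl, h, he, rfl, rfl⟩)
  · erw [dif_neg hv, dif_neg hl]
    by_cases he : G.P wk = G.P w
    · erw [dif_pos he]
      exact Or.inl ⟨w, wk, rfl, rfl, h, Or.inr (Or.inr ⟨lab3_not_var_not_lam hv hl, he⟩)⟩
    · erw [dif_neg he]
      exact Or.inr (Or.inr (Or.inl ⟨w, wk, rfl, lab3_not_var_not_lam hv hl, h, he, rfl⟩))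

lemma getElem?_gargs_inl (G : LamApHoTG i V) (j : ℕ) {w wk : V} {k : ℕ}
    (h : G.toTermGraph.Succ k w wk) (hw : GVP G.toTermGraph G.P (.inl w)) :
    (gargs G j ⟨.inl w, hw⟩)[k]? = some (childOf G w wk k h) := by
  rw [gargs_inl, List.getElem?_ofFn]
  erw [dif_pos (succ_index_lt h)]
  congr 1
  obtain ⟨hk, hget⟩ := succ_getElem h
  subst hget
  rfl

lemma succ_iff (G : LamApHoTG i V) {j : ℕ} (hj : j = 1 ∨ j = 2) (k : ℕ)
    (x y : GVert G.toTermGraph G.P) :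
    (gargs G j x)[k]? = some y ↔ CSucc j G.toTermGraph G.P k x y := by
  obtain ⟨xv, hx⟩ := x
  cases xv with
  | inl w =>
    constructor
    · intro h
      have hk : k < (G.toTermGraph.args w).length := by
        rw [gargs_inl, List.getElem?_ofFn] at h
        by_contra hk
        erw [dif_neg hk] at h
        cases h
      have hsucc : G.toTermGraph.Succ k w ((G.toTermGraph.args w)[k]'hk) := by
        show (G.toTermGraph.args w)[k]? = _
        rw [List.getElem?_eq_getElem hk]
      have hy : childOf G w _ k hsucc = y := by
        have := getElem?_gargs_inl G j hsucc hx
        rw [this] at h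
        exact Option.some.inj h
      rw [← hy]
      exact csucc_of_childOf G j hsucc hx
    · intro h
      rcases h with ⟨w₂, wk, hxv, hyv, hsucc, hdis⟩ |
        ⟨w₂, w₀, hxv, hl, hsucc, hne, hk0, hyv⟩ |
        ⟨w₂, wk, hxv, hl, hsucc, hne, hyv⟩ |
        ⟨_, _, _, _, _, hxv, _⟩ | ⟨_, _, _, _, hxv, _⟩ | ⟨_, _, _, _, _, _, hxv, _⟩
      · injection hxv with hw2; subst hw2
        rw [getElem?_gargs_inl G j hsucc hx]
        congr 1
        apply Subtype.ext
        rw [hyv]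
        unfold childOf
        rcases hdis with hv | ⟨hl, he⟩ | ⟨ha, he⟩
        · erw [dif_pos hv]
        · erw [dif_neg (by simp [hl]), dif_pos hl, dif_pos he]
        · erw [dif_neg (by simp [ha]), dif_neg (by simp [ha]), dif_pos he]
      · injection hxv with hw2; subst hw2; subst hk0
        rw [getElem?_gargs_inl G j hsucc hx]
        congr 1
        apply Subtype.ext
        rw [hyv]
        unfold childOf
        erw [dif_neg (by simp [hl]), dif_pos hl, dif_neg hne]
      · injection hxv with hw2; subst hw2
        rw [getElem?_gargs_inl G j hsucc hx]
        congr 1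
        apply Subtype.ext
        rw [hyv]
        unfold childOf
        erw [dif_neg (by simp [hl]), dif_neg (by simp [hl]), dif_neg hne]
      · simp at hxv
      · simp at hxv
      · simp at hxv
  | inr t =>
    obtain ⟨w, k', w', p⟩ := t
    rw [gargs_inr]
    cases k with
    | zero =>
      rw [List.getElem?_cons_zero]
      constructor
      · intro h
        have hy := Option.some.inj h
        by_cases he : G.P w' = p.dropLast
        · erw [dif_pos he] at hy
          refine Or.inr (Or.inr (Or.inr (Or.inr (Or.inl
            ⟨w, k', w', p.getLast (gvp_ne_nil hx), ?_, rfl, ?_⟩))))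
          · rw [he, List.dropLast_append_getLast]
          · rw [← hy]
        · erw [dif_neg he] at hy
          refine Or.inr (Or.inr (Or.inr (Or.inl
            ⟨w, k', w', p.dropLast, p.getLast (gvp_ne_nil hx), ?_, rfl, he, ?_⟩)))
          · rw [List.dropLast_append_getLast]
          · rw [← hy]
      · intro h
        rcases h with ⟨_, _, hxv, _⟩ | ⟨_, _, hxv, _⟩ | ⟨_, _, hxv, _⟩ |
          ⟨w₂, k₂, w₂', q, v, hxv, _, hne, hyv⟩ |
          ⟨w₂, k₂, w₂', v, hxv, _, hyv⟩ |
          ⟨_, _, _, _, _, _, _, hk1, _⟩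
        · simp at hxv
        · simp at hxv
        · simp at hxv
        · simp only [Sum.inr.injEq, Prod.mk.injEq] at hxv
          obtain ⟨rfl, rfl, rfl, hp⟩ := hxv
          subst hp
          erw [dif_neg (by simpa [List.dropLast_concat] using hne)]
          congr 1
          apply Subtype.ext
          rw [hyv]
          simp [List.dropLast_concat]
        · simp only [Sum.inr.injEq, Prod.mk.injEq] at hxv
          obtain ⟨rfl, rfl, rfl, hp⟩ := hxv
          subst hp
          erw [dif_pos (by simp [List.dropLast_concat])]
          congr 1
          apply Subtype.ext
          rw [hyv]
        · exact absurd hk1 (by omega)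
    | succ k =>
      erw [List.getElem?_cons_succ, List.getElem?_replicate]
      constructor
      · intro h
        split_ifs at h with hklt
        have hy := Option.some.inj h
        have hj2 : j = 2 := by rcases hj with hj | hj <;> omega
        have hk0 : k = 0 := by rcases hj with hj | hj <;> omega
        subst hk0
        refine Or.inr (Or.inr (Or.inr (Or.inr (Or.inr
          ⟨hj2, w, k', w', p.dropLast, p.getLast (gvp_ne_nil hx), ?_, rfl, ?_⟩))))
        · rw [List.dropLast_append_getLast]
        · rw [← hy]
      · intro h
        rcases h with ⟨_, _, hxv, _⟩ | ⟨_, _, hxv, _⟩ | ⟨_, _, hxv, _⟩ |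
          ⟨_, _, _, _, _, _, hk0, _⟩ | ⟨_, _, _, _, _, hk0, _⟩ |
          ⟨hj2, w₂, k₂, w₂', p₀, v, hxv, hk1, hyv⟩
        · simp at hxv
        · simp at hxv
        · simp at hxv
        · exact absurd hk0 (by omega)
        · exact absurd hk0 (by omega)
        · have hk0 : k = 0 := by omega
          subst hk0; subst hj2
          simp only [Sum.inr.injEq, Prod.mk.injEq] at hxv
          obtain ⟨rfl, rfl, rfl, hp⟩ := hxv
          subst hp
          rw [if_pos (by omega)]
          congr 1
          apply Subtype.ext
          rw [hyv]
          simp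

/-- The abstraction-prefix function of the image of `G_i^j`. -/
noncomputable def gpre (G : LamApHoTG i V) :
    GVert G.toTermGraph G.P → List (GVert G.toTermGraph G.P)
  | ⟨.inl w, _⟩ => (G.P w).map (fun v => ⟨.inl v, gvp_inl⟩)
  | ⟨.inr (_, _, _, p), _⟩ => p.map (fun v => ⟨.inl v, gvp_inl⟩)

lemma gpre_inl (G : LamApHoTG i V) (w : V) (h : GVP G.toTermGraph G.P (.inl w)) :
    gpre G ⟨.inl w, h⟩ = (G.P w).map (fun v => ⟨.inl v, gvp_inl⟩) := rfl

lemma gpre_inr (G : LamApHoTG i V) (w : V) (k' : ℕ) (w' : V) (p : List V)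
    (h : GVP G.toTermGraph G.P (.inr (w, k', w', p))) :
    gpre G ⟨.inr (w, k', w', p), h⟩ = p.map (fun v => ⟨.inl v, gvp_inl⟩) := rfl

lemma lab3to4_eq_lam {l : Lab3} (h : lab3to4 l = .lam) : l = .lam := by
  cases l <;> simp_all [lab3to4]

lemma lab3to4_eq_app {l : Lab3} (h : lab3to4 l = .app) : l = .app := by
  cases l <;> simp_all [lab3to4]

lemma lab3to4_eq_var {l : Lab3} (h : lab3to4 l = .var) : l = .var := by
  cases l <;> simp_all [lab3to4]

lemma lab3to4_ne_del (l : Lab3) : lab3to4 l ≠ .del := by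
  cases l <;> simp [lab3to4]

end GMapAux


/-- Proposition 5.4: the mapping G_i^j, inserting chains of scope-delimiter vertices
    wherever the abstraction prefix decreases along an edge (with back-links for j=2),
    is well-defined from λ-ap-ho-term-graphs over Σλ^i to λ-term-graphs over Σλ^{i,j}:
    the image term graph exists and admits a correct abstraction-prefix function. -/
theorem gmap_well_defined :
    ∀ i ∈ ({0, 1} : Set ℕ), ∀ j ∈ ({1, 2} : Set ℕ),
      ∀ (V : Type) (G : LamApHoTG i V),
        ∃ G' : TermGraph Lab4 (ar4 i j) (GVert G.toTermGraph G.P),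
          IsGImage i j G.toTermGraph G.P G' ∧
          ∃ P' : GVert G.toTermGraph G.P → List (GVert G.toTermGraph G.P),
            CorrectAP4 i j G' P' := by
  intro i hi j hj V G
  have hi' : i = 0 ∨ i = 1 := by simpa using hi
  have hj' : j = 1 ∨ j = 2 := by simpa using hj
  refine ⟨⟨GLab G.toTermGraph G.P, gargs G j, ⟨.inl G.toTermGraph.root, gvp_inl⟩, ?_, ?_⟩,
    ⟨rfl, fun _ => rfl, fun k x y => succ_iff G hj' k x y⟩, gpre G, ?_, ?_, ?_, ?_, ?_, ?_, ?_⟩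
  · -- args_len
    rintro ⟨xv, hx⟩
    cases xv with
    | inl w =>
      rw [gargs_inl]
      show (List.ofFn _).length = ar4 i j (lab3to4 (G.toTermGraph.lab w))
      rw [List.length_ofFn, G.toTermGraph.args_len]
      cases G.toTermGraph.lab w <;> simp [ar3, ar4, lab3to4]
    | inr t =>
      obtain ⟨w, k', w', p⟩ := t
      rw [gargs_inr]
      show _ = ar4 i j .del
      simp only [List.length_cons, ar4]
      erw [List.length_replicate]
      omega
  · -- reach
    exact fun x => reach_all G j x
  · -- (root)
    show gpre G ⟨.inl G.toTermGraph.root, gvp_inl⟩ = []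
    rw [gpre_inl, G.correct.1]
    rfl
  · -- (λ)
    rintro ⟨xv, hx⟩ y hlab hsucc
    replace hsucc := (succ_iff G hj' 0 _ _).mp hsucc
    cases xv with
    | inr t =>
      obtain ⟨w, k', w', p⟩ := t
      exact absurd hlab (by simp [GLab])
    | inl w =>
      have hl : G.toTermGraph.lab w = .lam := lab3to4_eq_lam hlab
      obtain ⟨yv, hy⟩ := y
      rcases hsucc with ⟨w₂, wk, hxv, hyv, hsucc', hdis⟩ |
        ⟨w₂, w₀, hxv, _, hsucc', hne, _, hyv⟩ |
        ⟨w₂, wk, hxv, ha, _⟩ |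
        ⟨_, _, _, _, _, hxv, _⟩ | ⟨_, _, _, _, hxv, _⟩ | ⟨_, _, _, _, _, _, hxv, _⟩
      · injection hxv with hw2; subst hw2
        simp only at hyv; subst hyv
        rcases hdis with hv | ⟨_, he⟩ | ⟨ha, _⟩
        · rw [hl] at hv; cases hv
        · rw [gpre_inl, gpre_inl, he]
          exact List.map_append
        · rw [hl] at ha; cases ha
      · injection hxv with hw2; subst hw2
        simp only at hyv; subst hyv
        rw [gpre_inl, gpre_inr]
        exact List.map_append
      · injection hxv with hw2; subst hw2
        rw [hl] at ha; cases ha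
      · simp at hxv
      · simp at hxv
      · simp at hxv
  · -- (@)
    rintro ⟨xv, hx⟩ y k hlab hsucc
    replace hsucc := (succ_iff G hj' k _ _).mp hsucc
    cases xv with
    | inr t =>
      obtain ⟨w, k', w', p⟩ := t
      exact absurd hlab (by simp [GLab])
    | inl w =>
      have ha : G.toTermGraph.lab w = .app := lab3to4_eq_app hlab
      obtain ⟨yv, hy⟩ := y
      rcases hsucc with ⟨w₂, wk, hxv, hyv, hsucc', hdis⟩ |
        ⟨w₂, w₀, hxv, hlm, _⟩ |
        ⟨w₂, wk, hxv, _, hsucc', hne, hyv⟩ |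
        ⟨_, _, _, _, _, hxv, _⟩ | ⟨_, _, _, _, hxv, _⟩ | ⟨_, _, _, _, _, _, hxv, _⟩
      · injection hxv with hw2; subst hw2
        simp only at hyv; subst hyv
        rcases hdis with hv | ⟨hlm, _⟩ | ⟨_, he⟩
        · rw [ha] at hv; cases hv
        · rw [ha] at hlm; cases hlm
        · rw [gpre_inl, gpre_inl, he]
      · injection hxv with hw2; subst hw2
        rw [ha] at hlm; cases hlm
      · injection hxv with hw2; subst hw2
        simp only at hyv; subst hyv
        rw [gpre_inl, gpre_inr]
      · simp at hxv
      · simp at hxv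
      · simp at hxv
  · -- (0)₀
    rintro ⟨xv, hx⟩ hlab
    cases xv with
    | inr t =>
      obtain ⟨w, k', w', p⟩ := t
      exact absurd hlab (by simp [GLab])
    | inl w =>
      have hv : G.toTermGraph.lab w = .var := lab3to4_eq_var hlab
      have := G.correct.2.2.2.1 w hv
      rw [gpre_inl]
      exact fun h => this (List.map_eq_nil_iff.mp h)
  · -- (0)₁
    rintro hi1 ⟨xv, hx⟩ y hlab hsucc
    replace hsucc := (succ_iff G hj' 0 _ _).mp hsucc
    cases xv with
    | inr t =>
      obtain ⟨w, k', w', p⟩ := t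
      exact absurd hlab (by simp [GLab])
    | inl w =>
      have hv : G.toTermGraph.lab w = .var := lab3to4_eq_var hlab
      obtain ⟨yv, hy⟩ := y
      rcases hsucc with ⟨w₂, wk, hxv, hyv, hsucc', hdis⟩ |
        ⟨w₂, w₀, hxv, hlm, _⟩ |
        ⟨w₂, wk, hxv, ha, _⟩ |
        ⟨_, _, _, _, _, hxv, _⟩ | ⟨_, _, _, _, hxv, _⟩ | ⟨_, _, _, _, _, _, hxv, _⟩
      · injection hxv with hw2; subst hw2
        simp only at hyv; subst hyv
        obtain ⟨hlam₀, hPeq⟩ := G.correct.2.2.2.2 hi1 w wk hv hsucc'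
        constructor
        · show lab3to4 (G.toTermGraph.lab wk) = .lam
          rw [hlam₀]; rfl
        · rw [gpre_inl, gpre_inl, ← hPeq]
          exact Eq.symm List.map_append
      · injection hxv with hw2; subst hw2
        rw [hv] at hlm; cases hlm
      · injection hxv with hw2; subst hw2
        rw [hv] at ha; cases ha
      · simp at hxv
      · simp at hxv
      · simp at hxv
  · -- (S)₁
    rintro ⟨xv, hx⟩ y hlab hsucc
    replace hsucc := (succ_iff G hj' 0 _ _).mp hsucc
    cases xv with
    | inl w =>
      exact absurd hlab (lab3to4_ne_del _)
    | inr t =>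
      obtain ⟨w, k', w', p⟩ := t
      obtain ⟨yv, hy⟩ := y
      rcases hsucc with ⟨_, _, hxv, _⟩ | ⟨_, _, hxv, _⟩ | ⟨_, _, hxv, _⟩ |
        ⟨w₂, k₂, w₂', q, v, hxv, _, hne, hyv⟩ |
        ⟨w₂, k₂, w₂', v, hxv, _, hyv⟩ |
        ⟨_, _, _, _, _, _, _, hk1, _⟩
      · simp at hxv
      · simp at hxv
      · simp at hxv
      · simp only [Sum.inr.injEq, Prod.mk.injEq] at hxv
        obtain ⟨rfl, rfl, rfl, hp⟩ := hxv
        subst hp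
        simp only at hyv; subst hyv
        refine ⟨⟨.inl v, gvp_inl⟩, ?_⟩
        rw [gpre_inr, gpre_inr]
        exact Eq.symm List.map_append
      · simp only [Sum.inr.injEq, Prod.mk.injEq] at hxv
        obtain ⟨rfl, rfl, rfl, hp⟩ := hxv
        subst hp
        simp only at hyv; subst hyv
        refine ⟨⟨.inl v, gvp_inl⟩, ?_⟩
        rw [gpre_inr, gpre_inl]
        exact Eq.symm List.map_append
      · exact absurd hk1 (by omega)
  · -- (S)₂
    rintro hj2 ⟨xv, hx⟩ y hlab hsucc
    replace hsucc := (succ_iff G hj' 1 _ _).mp hsucc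
    cases xv with
    | inl w =>
      exact absurd hlab (lab3to4_ne_del _)
    | inr t =>
      obtain ⟨w, k', w', p⟩ := t
      obtain ⟨yv, hy⟩ := y
      rcases hsucc with ⟨_, _, hxv, _⟩ | ⟨_, _, hxv, _⟩ | ⟨_, _, hxv, _⟩ |
        ⟨_, _, _, _, _, _, hk0, _⟩ | ⟨_, _, _, _, _, hk0, _⟩ |
        ⟨_, w₂, k₂, w₂', p₀, v, hxv, _, hyv⟩
      · simp at hxv
      · simp at hxv
      · simp at hxv
      · exact absurd hk0 (by omega)
      · exact absurd hk0 (by omega)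
      · simp only [Sum.inr.injEq, Prod.mk.injEq] at hxv
        obtain ⟨rfl, rfl, rfl, hp⟩ := hxv
        subst hp
        simp only at hyv; subst hyv
        have hgood : GoodL G.toTermGraph G.P (p₀ ++ [v]) := by
          rcases hx.2.2.2 with ⟨h1, h2⟩ | ⟨h1, h2⟩
          · exact goodL_of_prefix (goodL_concat (good_all hi' G w) h1 rfl) h2
          · exact goodL_of_prefix (good_all hi' G w) h2
        obtain ⟨hlv, hPv⟩ := hgood p₀ v (List.prefix_refl _)
        constructor
        · show lab3to4 (G.toTermGraph.lab v) = .lam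
          rw [hlv]; rfl
        · rw [gpre_inl, gpre_inr, hPv]
          exact Eq.symm List.map_append
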